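/- The function f(P) = Q(√(3P)) · log₂(√P) is nonincreasing for P ≥ 6, and in particular 2·Q(√(3P))·log₂(√P) ≤ 0.02 for all P ≥ 6. -/

import Mathlib

open MeasureTheory

/-- The standard Gaussian tail function `Q`. -/
noncomputable def gaussQ (x : ℝ) : ℝ :=
  (1 / Real.sqrt (2 * Real.pi)) * ∫ u in Set.Ioi x, Real.exp (-u ^ 2 / 2)

private lemma gcont : Continuous (fun u : ℝ => Real.exp (-u ^ 2 / 2)) := by
  fun_prop

private lemma gint : Integrable (fun u : ℝ => Real.exp (-u ^ 2 / 2)) := by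
  have h := integrable_exp_neg_mul_sq (b := (1:ℝ)/2) (by norm_num)
  have : (fun u : ℝ => Real.exp (-u ^ 2 / 2)) = fun u : ℝ => Real.exp (-(1/2) * u ^ 2) := by
    funext u; ring_nf
  rw [this]; exact h

private lemma tail_split {a x : ℝ} (h : a ≤ x) :
    ∫ u in Set.Ioi a, Real.exp (-u ^ 2 / 2) =
      (∫ u in a..x, Real.exp (-u ^ 2 / 2)) + ∫ u in Set.Ioi x, Real.exp (-u ^ 2 / 2) := by
  rw [intervalIntegral.integral_of_le h, ← Set.Ioc_union_Ioi_eq_Ioi h,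
    MeasureTheory.setIntegral_union (Set.Ioc_disjoint_Ioi le_rfl) measurableSet_Ioi
      gint.integrableOn gint.integrableOn]

private lemma hQderiv (x : ℝ) :
    HasDerivAt gaussQ (-(1 / Real.sqrt (2 * Real.pi) * Real.exp (-x ^ 2 / 2))) x := by
  set C : ℝ := 1 / Real.sqrt (2 * Real.pi) with hC
  have hF : HasDerivAt (fun y => ∫ u in (x-1)..y, Real.exp (-u ^ 2 / 2))
      (Real.exp (-x ^ 2 / 2)) x :=
    intervalIntegral.integral_hasDerivAt_right gint.intervalIntegrable
      (gcont.stronglyMeasurableAtFilter _ _) gcont.continuousAt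
  have hD : HasDerivAt
      (fun y => C * ((∫ u in Set.Ioi (x-1), Real.exp (-u ^ 2 / 2)) -
        ∫ u in (x-1)..y, Real.exp (-u ^ 2 / 2)))
      (C * (0 - Real.exp (-x ^ 2 / 2))) x :=
    ((hasDerivAt_const _ _).sub hF).const_mul C
  have heq : gaussQ =ᶠ[nhds x]
      (fun y => C * ((∫ u in Set.Ioi (x-1), Real.exp (-u ^ 2 / 2)) -
        ∫ u in (x-1)..y, Real.exp (-u ^ 2 / 2))) := by
    filter_upwards [Ioi_mem_nhds (show x - 1 < x by linarith)] with y hy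
    rw [gaussQ, tail_split (le_of_lt hy)]
    ring
  have := hD.congr_of_eventuallyEq heq
  exact this.congr_deriv (by ring)

private lemma moment {x : ℝ} (hx : 0 < x) :
    IntegrableOn (fun u : ℝ => u * Real.exp (-u ^ 2 / 2)) (Set.Ioi x) ∧
      ∫ u in Set.Ioi x, u * Real.exp (-u ^ 2 / 2) = Real.exp (-x ^ 2 / 2) := by
  have hderiv : ∀ u ∈ Set.Ioi x, HasDerivAt (fun u : ℝ => -Real.exp (-u ^ 2 / 2))
      (u * Real.exp (-u ^ 2 / 2)) u := by
    intro u _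
    have h1 : HasDerivAt (fun u : ℝ => -u ^ 2 / 2) (-u) u := by
      have := ((hasDerivAt_pow 2 u).div_const 2).neg
      have e : (fun u : ℝ => -u ^ 2 / 2) = -fun x : ℝ => x ^ 2 / 2 := by
        funext v; simp only [Pi.neg_apply]; ring
      rw [e]; exact this.congr_deriv (by norm_num)
    have := (h1.exp).neg
    exact this.congr_deriv (by ring)
  have hnonneg : ∀ u ∈ Set.Ioi x, 0 ≤ u * Real.exp (-u ^ 2 / 2) := by
    intro u hu
    exact mul_nonneg (le_of_lt (lt_trans hx hu)) (Real.exp_pos _).le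
  have hcont : ContinuousWithinAt (fun u : ℝ => -Real.exp (-u ^ 2 / 2)) (Set.Ici x) x :=
    (gcont.neg).continuousWithinAt
  have htend : Filter.Tendsto (fun u : ℝ => -Real.exp (-u ^ 2 / 2)) Filter.atTop (nhds 0) := by
    have h : Filter.Tendsto (fun u : ℝ => -u ^ 2 / 2) Filter.atTop Filter.atBot := by
      apply Filter.Tendsto.atBot_div_const (by norm_num)
      exact Filter.tendsto_neg_atBot_iff.mpr (Filter.tendsto_pow_atTop two_ne_zero)
    simpa using (Real.tendsto_exp_atBot.comp h).neg
  refine ⟨integrableOn_Ioi_deriv_of_nonneg hcont hderiv hnonneg htend, ?_⟩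
  rw [integral_Ioi_of_hasDerivAt_of_nonneg hcont hderiv hnonneg htend]
  ring

private lemma gaussQ_nonneg (x : ℝ) : 0 ≤ gaussQ x := by
  apply mul_nonneg (by positivity)
  exact MeasureTheory.setIntegral_nonneg measurableSet_Ioi fun u _ => (Real.exp_pos _).le

private lemma mills {x : ℝ} (hx : 0 < x) :
    gaussQ x ≤ 1 / Real.sqrt (2 * Real.pi) * Real.exp (-x ^ 2 / 2) / x := by
  obtain ⟨hint, hval⟩ := moment hx
  have hmono : ∫ u in Set.Ioi x, Real.exp (-u ^ 2 / 2) ≤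
      ∫ u in Set.Ioi x, u * Real.exp (-u ^ 2 / 2) / x := by
    apply MeasureTheory.setIntegral_mono_on gint.integrableOn (hint.div_const x)
      measurableSet_Ioi
    intro u hu
    have h1 : 1 ≤ u / x := (one_le_div hx).2 (le_of_lt hu)
    calc Real.exp (-u ^ 2 / 2) = 1 * Real.exp (-u ^ 2 / 2) := by ring
      _ ≤ (u / x) * Real.exp (-u ^ 2 / 2) :=
          mul_le_mul_of_nonneg_right h1 (Real.exp_pos _).le
      _ = u * Real.exp (-u ^ 2 / 2) / x := by ring
  have h2 : ∫ u in Set.Ioi x, u * Real.exp (-u ^ 2 / 2) / x = Real.exp (-x ^ 2 / 2) / x := by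
    rw [MeasureTheory.integral_div, hval]
  rw [gaussQ]
  have hC : (0:ℝ) < 1 / Real.sqrt (2 * Real.pi) := by positivity
  calc 1 / Real.sqrt (2 * Real.pi) * ∫ u in Set.Ioi x, Real.exp (-u ^ 2 / 2)
      ≤ 1 / Real.sqrt (2 * Real.pi) * (Real.exp (-x ^ 2 / 2) / x) := by
        apply mul_le_mul_of_nonneg_left _ hC.le
        rw [← h2]; exact hmono
    _ = 1 / Real.sqrt (2 * Real.pi) * Real.exp (-x ^ 2 / 2) / x := by ring

private noncomputable def Faux (P : ℝ) : ℝ :=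
  gaussQ (Real.sqrt (3 * P)) * (Real.log P / (2 * Real.log 2))

private lemma Faux_eq {P : ℝ} (hP : 0 ≤ P) :
    gaussQ (Real.sqrt (3 * P)) * Real.logb 2 (Real.sqrt P) = Faux P := by
  rw [Faux, Real.logb, Real.log_sqrt hP]
  ring

private lemma Faux_hasDeriv {P : ℝ} (hP : 0 < P) :
    HasDerivAt Faux
      (-(1 / Real.sqrt (2 * Real.pi) * Real.exp (-(3 * P) / 2)) * (3 / (2 * Real.sqrt (3 * P))) *
        (Real.log P / (2 * Real.log 2)) +
       gaussQ (Real.sqrt (3 * P)) * (P⁻¹ / (2 * Real.log 2))) P := by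
  have h3P : (0:ℝ) < 3 * P := by linarith
  have hs : HasDerivAt (fun P : ℝ => Real.sqrt (3 * P)) (3 / (2 * Real.sqrt (3 * P))) P := by
    have hinner : HasDerivAt (fun P : ℝ => 3 * P) 3 P := by
      simpa using (hasDerivAt_id P).const_mul (3:ℝ)
    exact hinner.sqrt (ne_of_gt h3P)
  have hq : HasDerivAt (fun P : ℝ => gaussQ (Real.sqrt (3 * P)))
      (-(1 / Real.sqrt (2 * Real.pi) * Real.exp (-(3 * P) / 2)) *
        (3 / (2 * Real.sqrt (3 * P)))) P := by
    have := (hQderiv (Real.sqrt (3 * P))).comp P hs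
    have hsq : Real.sqrt (3 * P) ^ 2 = 3 * P := Real.sq_sqrt h3P.le
    simpa only [Function.comp_def, hsq] using this
  have hl : HasDerivAt (fun P : ℝ => Real.log P / (2 * Real.log 2)) (P⁻¹ / (2 * Real.log 2)) P :=
    (Real.hasDerivAt_log (ne_of_gt hP)).div_const _
  exact hq.mul hl

private lemma log_six : (1:ℝ) ≤ Real.log 6 := by
  have : Real.exp 1 < 6 := by
    have := Real.exp_one_lt_d9
    linarith
  exact le_of_lt ((Real.lt_log_iff_exp_lt (by norm_num)).2 this)

private lemma Faux_anti : AntitoneOn Faux (Set.Ici (6:ℝ)) := by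
  have hL2 : (0:ℝ) < Real.log 2 := Real.log_pos one_lt_two
  apply antitoneOn_of_deriv_nonpos (convex_Ici 6)
  · intro P hP
    exact (Faux_hasDeriv (by simp at hP; linarith)).differentiableAt.continuousAt.continuousWithinAt
  · rw [interior_Ici]
    intro P hP
    simp only [Set.mem_Ioi] at hP
    exact (Faux_hasDeriv (by linarith)).differentiableAt.differentiableWithinAt
  · rw [interior_Ici]
    intro P hP
    simp only [Set.mem_Ioi] at hP
    have hP0 : (0:ℝ) < P := by linarith
    rw [(Faux_hasDeriv hP0).deriv]
    have hx : 0 < Real.sqrt (3 * P) := Real.sqrt_pos.2 (by linarith)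
    have hA0 : 0 < 1 / Real.sqrt (2 * Real.pi) * Real.exp (-(3 * P) / 2) := by positivity
    set x := Real.sqrt (3 * P) with hxdef
    set A := 1 / Real.sqrt (2 * Real.pi) * Real.exp (-(3 * P) / 2) with hAdef
    have hQle : gaussQ x ≤ A / x := by
      have hm := mills hx
      rw [hxdef, Real.sq_sqrt (by linarith : (0:ℝ) ≤ 3 * P)] at hm
      rw [hAdef, hxdef]
      exact hm
    have hlP : 1 ≤ Real.log P := by
      calc (1:ℝ) ≤ Real.log 6 := log_six
        _ ≤ Real.log P := Real.log_le_log (by norm_num) (by linarith)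
    have key : gaussQ x * (P⁻¹ / (2 * Real.log 2)) ≤
        A * (3 / (2 * x)) * (Real.log P / (2 * Real.log 2)) := by
      have h1 : gaussQ x * (P⁻¹ / (2 * Real.log 2)) ≤ (A / x) * (P⁻¹ / (2 * Real.log 2)) :=
        mul_le_mul_of_nonneg_right hQle (by positivity)
      have hP1 : P⁻¹ ≤ 3 / 2 * Real.log P := by
        have h6 : P⁻¹ ≤ 6⁻¹ := by
          apply inv_anti₀ (by norm_num) (by linarith)
        linarith
      have h2 : (A / x) * (P⁻¹ / (2 * Real.log 2)) ≤
          (A / x) * ((3 / 2 * Real.log P) / (2 * Real.log 2)) := by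
        gcongr
      have h3 : (A / x) * ((3 / 2 * Real.log P) / (2 * Real.log 2)) =
          A * (3 / (2 * x)) * (Real.log P / (2 * Real.log 2)) := by
        field_simp
      linarith
    nlinarith [key]

theorem gaussQ_log_antitone :
    AntitoneOn (fun P : ℝ => gaussQ (Real.sqrt (3 * P)) * Real.logb 2 (Real.sqrt P))
      (Set.Ici (6 : ℝ)) ∧
    ∀ P : ℝ, 6 ≤ P →
      2 * gaussQ (Real.sqrt (3 * P)) * Real.logb 2 (Real.sqrt P) ≤ 0.02 := by
  have hL2 : (0:ℝ) < Real.log 2 := Real.log_pos one_lt_two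
  have hant : AntitoneOn
      (fun P : ℝ => gaussQ (Real.sqrt (3 * P)) * Real.logb 2 (Real.sqrt P))
      (Set.Ici (6 : ℝ)) := by
    intro a ha b hb hab
    simp only [Set.mem_Ici] at ha hb
    show gaussQ (Real.sqrt (3 * b)) * Real.logb 2 (Real.sqrt b) ≤
      gaussQ (Real.sqrt (3 * a)) * Real.logb 2 (Real.sqrt a)
    rw [Faux_eq (by linarith), Faux_eq (by linarith)]
    exact Faux_anti (by simpa using ha) (by simpa using hb) hab
  refine ⟨hant, ?_⟩
  intro P hP
  -- bound the value at 6
  have hq6 : gaussQ (Real.sqrt (3 * 6)) ≤ 1 / 2048 := by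
    have hx : (0:ℝ) < Real.sqrt (3 * 6) := Real.sqrt_pos.2 (by norm_num)
    have hm := mills hx
    rw [Real.sq_sqrt (by norm_num : (0:ℝ) ≤ 3 * 6)] at hm
    have hC : 1 / Real.sqrt (2 * Real.pi) ≤ 1 := by
      rw [div_le_one (by positivity)]
      rw [show (1:ℝ) = Real.sqrt 1 by simp]
      apply Real.sqrt_le_sqrt
      nlinarith [Real.pi_gt_three]
    have hexp : Real.exp (-(3 * (6:ℝ)) / 2) ≤ 1 / 512 := by
      rw [show -(3 * (6:ℝ)) / 2 = -(9:ℝ) by norm_num, Real.exp_neg]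
      have h9 : (512:ℝ) ≤ Real.exp 9 := by
        have he : Real.exp (9:ℝ) = Real.exp 1 ^ 9 := by
          rw [← Real.exp_nat_mul]; norm_num
        rw [he]
        calc (512:ℝ) = 2 ^ 9 := by norm_num
          _ ≤ Real.exp 1 ^ 9 :=
            pow_le_pow_left₀ (by norm_num) (by linarith [Real.exp_one_gt_d9]) 9
      calc (Real.exp 9)⁻¹ ≤ (512:ℝ)⁻¹ := inv_anti₀ (by norm_num) h9
        _ = 1 / 512 := by norm_num
    have hs18 : (4:ℝ) ≤ Real.sqrt (3 * 6) := by
      rw [Real.le_sqrt (by norm_num) (by norm_num)]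
      norm_num
    calc gaussQ (Real.sqrt (3 * 6))
        ≤ 1 / Real.sqrt (2 * Real.pi) * Real.exp (-(3 * (6:ℝ)) / 2) / Real.sqrt (3 * 6) := hm
      _ ≤ 1 * (1 / 512) / 4 := by
          apply div_le_div₀ (by norm_num)
            (mul_le_mul hC hexp (Real.exp_pos _).le (by norm_num)) (by norm_num) hs18
      _ = 1 / 2048 := by norm_num
  have hlog6 : Real.logb 2 (Real.sqrt 6) ≤ 2 := by
    have h16 : Real.sqrt 16 = 4 := by
      rw [show (16:ℝ) = 4 ^ 2 by norm_num, Real.sqrt_sq (by norm_num)]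
    have h1 : Real.sqrt 6 ≤ 4 := by
      rw [← h16]
      exact Real.sqrt_le_sqrt (by norm_num)
    calc Real.logb 2 (Real.sqrt 6) ≤ Real.logb 2 4 :=
        (Real.logb_le_logb one_lt_two (Real.sqrt_pos.2 (by norm_num)) (by norm_num)).2 h1
      _ = 2 := by
        rw [show (4:ℝ) = 2 ^ (2:ℕ) by norm_num, Real.logb, Real.log_pow, mul_div_assoc,
          div_self (ne_of_gt hL2)]
        norm_num
  have hlog60 : 0 ≤ Real.logb 2 (Real.sqrt 6) := by
    apply Real.logb_nonneg one_lt_two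
    rw [show (1:ℝ) = Real.sqrt 1 by simp]
    exact Real.sqrt_le_sqrt (by norm_num)
  have h6 : Faux 6 ≤ 1 / 1024 := by
    rw [← Faux_eq (by norm_num : (0:ℝ) ≤ 6)]
    calc gaussQ (Real.sqrt (3 * 6)) * Real.logb 2 (Real.sqrt 6)
        ≤ (1 / 2048) * 2 :=
          mul_le_mul hq6 hlog6 hlog60 (by norm_num)
      _ = 1 / 1024 := by norm_num
  have hPle : Faux P ≤ Faux 6 := Faux_anti Set.self_mem_Ici (by simpa using hP) hP
  have hfP : gaussQ (Real.sqrt (3 * P)) * Real.logb 2 (Real.sqrt P) = Faux P :=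
    Faux_eq (by linarith)
  calc 2 * gaussQ (Real.sqrt (3 * P)) * Real.logb 2 (Real.sqrt P)
      = 2 * Faux P := by rw [mul_assoc, hfP]
    _ ≤ 2 * (1 / 1024) := by linarith
    _ ≤ 0.02 := by norm_num
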